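/- Let t ≥ 0, b = 30t+29, a = 30t+31 be twin primes. Then max over n ≥ 2 of (H_a(n) − H_b(n)) is at most 6 if and only if 30t+37, 30t+41, 30t+43 are all prime, i.e. if and only if 30t+29, 30t+31, 30t+37, 30t+41, 30t+43 form a constellation p, p+2, p+8, p+12, p+14 of five consecutive primes. -/

import Mathlib

/-- The H-sequence with starting value `c`: `Hseq c 2 = c` and for `n ≥ 2`,
`Hseq c (n+1)` is the least `m > Hseq c n` with (`m` prime ↔ `n+1` prime). -/
noncomputable def Hseq (c : ℕ) : ℕ → ℕ
  | 0 => c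
  | 1 => c
  | 2 => c
  | n + 3 => sInf {m | Hseq c (n + 2) < m ∧ (Nat.Prime m ↔ Nat.Prime (n + 3))}
/-- A list of primes, strictly increasing, with no other primes in between. -/
def ConsecPrimes (l : List ℕ) : Prop :=
  l.Chain' (· < ·) ∧ (∀ x ∈ l, Nat.Prime x) ∧
    ∀ q, Nat.Prime q → l.headI ≤ q → q ≤ l.getLast! → q ∈ l

private lemma hseq3' (c n : ℕ) : Hseq c (n+3) =
    sInf {m | Hseq c (n + 2) < m ∧ (Nat.Prime m ↔ Nat.Prime (n + 3))} := rfl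

private lemma np_dvd {d n : ℕ} (h1 : 2 ≤ d) (hn : d < n) (hd : d ∣ n) : ¬ n.Prime := by
  intro hp
  rcases hp.eq_one_or_self_of_dvd d hd with h | h <;> omega

private lemma hseq_succ {c n : ℕ} (hn : 2 ≤ n) :
    Hseq c (n+1) = sInf {m | Hseq c n < m ∧ (Nat.Prime m ↔ Nat.Prime (n+1))} := by
  obtain ⟨m, rfl⟩ : ∃ m, n = m + 2 := ⟨n - 2, by omega⟩
  exact hseq3' c m

private lemma hseq_spec {c : ℕ} (n : ℕ) (hn : 2 ≤ n) :
    Hseq c n < Hseq c (n+1) ∧ (Nat.Prime (Hseq c (n+1)) ↔ Nat.Prime (n+1)) := by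
  have hne : {m | Hseq c n < m ∧ (Nat.Prime m ↔ Nat.Prime (n+1))}.Nonempty := by
    by_cases hp : Nat.Prime (n+1)
    · obtain ⟨q, hq1, hq2⟩ := Nat.exists_infinite_primes (Hseq c n + 1)
      exact ⟨q, by omega, by simp [hq2, hp]⟩
    · refine ⟨2*(Hseq c n + 2), by omega, ?_⟩
      simp only [Set.mem_setOf_eq, hp, iff_false]
      exact np_dvd (by norm_num) (by omega) ⟨_, rfl⟩
  have h := Nat.sInf_mem hne
  rw [hseq_succ hn]
  exact h

private lemma hstep {c x y : ℕ} (n : ℕ) (hn : 2 ≤ n) (hx : Hseq c n = x) (hy : x < y)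
    (hp : Nat.Prime y ↔ Nat.Prime (n+1))
    (hmin : ∀ z, x < z → z < y → ¬(Nat.Prime z ↔ Nat.Prime (n+1))) : Hseq c (n+1) = y := by
  obtain ⟨h1, h2⟩ := hseq_spec (c := c) n hn
  rw [hx] at h1
  have hle : Hseq c (n+1) ≤ y := by
    rw [hseq_succ hn]; exact Nat.sInf_le ⟨by omega, hp⟩
  rcases lt_trichotomy (Hseq c (n+1)) y with h | h | h
  · exact absurd h2 (hmin _ h1 h)
  · exact h
  · omega

private lemma hle {c x y : ℕ} (n : ℕ) (hn : 2 ≤ n) (hx : Hseq c n = x) (hy : x < y)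
    (hp : Nat.Prime y ↔ Nat.Prime (n+1)) : Hseq c (n+1) ≤ y := by
  rw [hseq_succ hn]; exact Nat.sInf_le ⟨by omega, hp⟩

private lemma hcongr {c d : ℕ} (n : ℕ) (hn : 2 ≤ n) (h : Hseq c n = Hseq d n) :
    Hseq c (n+1) = Hseq d (n+1) := by
  rw [hseq_succ (c := c) hn, hseq_succ (c := d) hn, h]

set_option maxHeartbeats 1000000 in
private lemma tail13 (t : ℕ)
    (hyp : ∀ n, 2 ≤ n → Hseq (30*t+31) n - Hseq (30*t+29) n ≤ 6)
    (h53 : Nat.Prime (30*t+53))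
    (b13 : Hseq (30*t+29) 13 = 30*t+53)
    (a12 : Hseq (30*t+31) 12 = 30*t+54) : False := by
  have c54 : ¬ Nat.Prime (30*t+54) := np_dvd (d := 2) (by norm_num) (by omega) ⟨15*t+27, by ring⟩
  have c55 : ¬ Nat.Prime (30*t+55) := np_dvd (d := 5) (by norm_num) (by omega) ⟨6*t+11, by ring⟩
  have c56 : ¬ Nat.Prime (30*t+56) := np_dvd (d := 2) (by norm_num) (by omega) ⟨15*t+28, by ring⟩
  have c57 : ¬ Nat.Prime (30*t+57) := np_dvd (d := 3) (by norm_num) (by omega) ⟨10*t+19, by ring⟩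
  have c58 : ¬ Nat.Prime (30*t+58) := np_dvd (d := 2) (by norm_num) (by omega) ⟨15*t+29, by ring⟩
  have c60 : ¬ Nat.Prime (30*t+60) := np_dvd (d := 2) (by norm_num) (by omega) ⟨15*t+30, by ring⟩
  have c62 : ¬ Nat.Prime (30*t+62) := np_dvd (d := 2) (by norm_num) (by omega) ⟨15*t+31, by ring⟩
  have c63 : ¬ Nat.Prime (30*t+63) := np_dvd (d := 3) (by norm_num) (by omega) ⟨10*t+21, by ring⟩
  have c64 : ¬ Nat.Prime (30*t+64) := np_dvd (d := 2) (by norm_num) (by omega) ⟨15*t+32, by ring⟩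
  have c65 : ¬ Nat.Prime (30*t+65) := np_dvd (d := 5) (by norm_num) (by omega) ⟨6*t+13, by ring⟩
  -- a13
  have s13 := hseq_spec (c := 30*t+31) 12 (by norm_num)
  rw [a12] at s13
  have pr13 : Nat.Prime (Hseq (30*t+31) 13) := s13.2.mpr (by norm_num)
  have lo13 : 30*t+54 < Hseq (30*t+31) 13 := s13.1
  have hy13 := hyp 13 (by norm_num)
  rw [b13] at hy13
  have hc13 : Hseq (30*t+31) 13 = 30*t+55 ∨ Hseq (30*t+31) 13 = 30*t+56 ∨
      Hseq (30*t+31) 13 = 30*t+57 ∨ Hseq (30*t+31) 13 = 30*t+58 ∨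
      Hseq (30*t+31) 13 = 30*t+59 := by omega
  have a13 : Hseq (30*t+31) 13 = 30*t+59 := by
    rcases hc13 with h|h|h|h|h
    · rw [h] at pr13; exact absurd pr13 c55
    · rw [h] at pr13; exact absurd pr13 c56
    · rw [h] at pr13; exact absurd pr13 c57
    · rw [h] at pr13; exact absurd pr13 c58
    · exact h
  have h59 : Nat.Prime (30*t+59) := by rw [a13] at pr13; exact pr13
  have b14 : Hseq (30*t+29) 14 = 30*t+54 :=
    hstep 13 (by norm_num) b13 (by omega) (iff_of_false c54 (by norm_num))
      (by intro z h1 h2; exfalso; omega)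
  have a14 : Hseq (30*t+31) 14 = 30*t+60 :=
    hstep 13 (by norm_num) a13 (by omega) (iff_of_false c60 (by norm_num))
      (by intro z h1 h2; exfalso; omega)
  have b15 : Hseq (30*t+29) 15 = 30*t+55 :=
    hstep 14 (by norm_num) b14 (by omega) (iff_of_false c55 (by norm_num))
      (by intro z h1 h2; exfalso; omega)
  by_cases h61 : Nat.Prime (30*t+61)
  · have a15 : Hseq (30*t+31) 15 = 30*t+62 :=
      hstep 14 (by norm_num) a14 (by omega) (iff_of_false c62 (by norm_num))
        (by intro z h1 h2
            have hz : z = 30*t+61 := by omega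
            subst hz
            exact fun hiff => (by norm_num : ¬ Nat.Prime (14+1)) (hiff.mp h61))
    have hy15 := hyp 15 (by norm_num)
    rw [a15, b15] at hy15
    omega
  · have a15 : Hseq (30*t+31) 15 = 30*t+61 :=
      hstep 14 (by norm_num) a14 (by omega) (iff_of_false h61 (by norm_num))
        (by intro z h1 h2; exfalso; omega)
    have b16 : Hseq (30*t+29) 16 = 30*t+56 :=
      hstep 15 (by norm_num) b15 (by omega) (iff_of_false c56 (by norm_num))
        (by intro z h1 h2; exfalso; omega)
    have a16 : Hseq (30*t+31) 16 = 30*t+62 :=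
      hstep 15 (by norm_num) a15 (by omega) (iff_of_false c62 (by norm_num))
        (by intro z h1 h2; exfalso; omega)
    have b17 : Hseq (30*t+29) 17 = 30*t+59 :=
      hstep 16 (by norm_num) b16 (by omega) (iff_of_true h59 (by norm_num))
        (by intro z h1 h2
            have hz : z = 30*t+57 ∨ z = 30*t+58 := by omega
            rcases hz with rfl | rfl
            · exact fun hiff => c57 (hiff.mpr (by norm_num))
            · exact fun hiff => c58 (hiff.mpr (by norm_num)))
    have s17 := hseq_spec (c := 30*t+31) 16 (by norm_num)
    rw [a16] at s17
    have pr17 : Nat.Prime (Hseq (30*t+31) 17) := s17.2.mpr (by norm_num)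
    have lo17 : 30*t+62 < Hseq (30*t+31) 17 := s17.1
    have hy17 := hyp 17 (by norm_num)
    rw [b17] at hy17
    have hc17 : Hseq (30*t+31) 17 = 30*t+63 ∨ Hseq (30*t+31) 17 = 30*t+64 ∨
        Hseq (30*t+31) 17 = 30*t+65 := by omega
    rcases hc17 with h|h|h
    · rw [h] at pr17; exact c63 pr17
    · rw [h] at pr17; exact c64 pr17
    · rw [h] at pr17; exact c65 pr17

set_option maxHeartbeats 2000000 in
private lemma fwd (t : ℕ) (hb : Nat.Prime (30*t+29)) (ha : Nat.Prime (30*t+31))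
    (hyp : ∀ n, 2 ≤ n → Hseq (30*t+31) n - Hseq (30*t+29) n ≤ 6) :
    Nat.Prime (30*t+37) ∧ Nat.Prime (30*t+41) ∧ Nat.Prime (30*t+43) := by
  have c30 : ¬ Nat.Prime (30*t+30) := np_dvd (d := 2) (by norm_num) (by omega) ⟨15*t+15, by ring⟩
  have c32 : ¬ Nat.Prime (30*t+32) := np_dvd (d := 2) (by norm_num) (by omega) ⟨15*t+16, by ring⟩
  have c33 : ¬ Nat.Prime (30*t+33) := np_dvd (d := 3) (by norm_num) (by omega) ⟨10*t+11, by ring⟩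
  have c34 : ¬ Nat.Prime (30*t+34) := np_dvd (d := 2) (by norm_num) (by omega) ⟨15*t+17, by ring⟩
  have c35 : ¬ Nat.Prime (30*t+35) := np_dvd (d := 5) (by norm_num) (by omega) ⟨6*t+7, by ring⟩
  have c36 : ¬ Nat.Prime (30*t+36) := np_dvd (d := 2) (by norm_num) (by omega) ⟨15*t+18, by ring⟩
  have c38 : ¬ Nat.Prime (30*t+38) := np_dvd (d := 2) (by norm_num) (by omega) ⟨15*t+19, by ring⟩
  have c39 : ¬ Nat.Prime (30*t+39) := np_dvd (d := 3) (by norm_num) (by omega) ⟨10*t+13, by ring⟩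
  have c40 : ¬ Nat.Prime (30*t+40) := np_dvd (d := 2) (by norm_num) (by omega) ⟨15*t+20, by ring⟩
  have c42 : ¬ Nat.Prime (30*t+42) := np_dvd (d := 2) (by norm_num) (by omega) ⟨15*t+21, by ring⟩
  have c44 : ¬ Nat.Prime (30*t+44) := np_dvd (d := 2) (by norm_num) (by omega) ⟨15*t+22, by ring⟩
  have c45 : ¬ Nat.Prime (30*t+45) := np_dvd (d := 3) (by norm_num) (by omega) ⟨10*t+15, by ring⟩
  have c46 : ¬ Nat.Prime (30*t+46) := np_dvd (d := 2) (by norm_num) (by omega) ⟨15*t+23, by ring⟩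
  have c48 : ¬ Nat.Prime (30*t+48) := np_dvd (d := 2) (by norm_num) (by omega) ⟨15*t+24, by ring⟩
  have c50 : ¬ Nat.Prime (30*t+50) := np_dvd (d := 2) (by norm_num) (by omega) ⟨15*t+25, by ring⟩
  have c51 : ¬ Nat.Prime (30*t+51) := np_dvd (d := 3) (by norm_num) (by omega) ⟨10*t+17, by ring⟩
  have c52 : ¬ Nat.Prime (30*t+52) := np_dvd (d := 2) (by norm_num) (by omega) ⟨15*t+26, by ring⟩
  have c54 : ¬ Nat.Prime (30*t+54) := np_dvd (d := 2) (by norm_num) (by omega) ⟨15*t+27, by ring⟩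
  have c55 : ¬ Nat.Prime (30*t+55) := np_dvd (d := 5) (by norm_num) (by omega) ⟨6*t+11, by ring⟩
  have b2 : Hseq (30*t+29) 2 = 30*t+29 := rfl
  have a2 : Hseq (30*t+31) 2 = 30*t+31 := rfl
  have b3 : Hseq (30*t+29) 3 = 30*t+31 :=
    hstep 2 (by norm_num) b2 (by omega) (iff_of_true ha (by norm_num))
      (by intro z h1 h2
          have hz : z = 30*t+30 := by omega
          subst hz
          exact fun hiff => c30 (hiff.mpr (by norm_num)))
  have s3 := hseq_spec (c := 30*t+31) 2 (by norm_num)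
  rw [a2] at s3
  have pr3 : Nat.Prime (Hseq (30*t+31) 3) := s3.2.mpr (by norm_num)
  have lo3 : 30*t+31 < Hseq (30*t+31) 3 := s3.1
  have hy3 := hyp 3 (by norm_num)
  rw [b3] at hy3
  have a3 : Hseq (30*t+31) 3 = 30*t+37 := by
    have hc : Hseq (30*t+31) 3 = 30*t+32 ∨ Hseq (30*t+31) 3 = 30*t+33 ∨
        Hseq (30*t+31) 3 = 30*t+34 ∨ Hseq (30*t+31) 3 = 30*t+35 ∨
        Hseq (30*t+31) 3 = 30*t+36 ∨ Hseq (30*t+31) 3 = 30*t+37 := by omega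
    rcases hc with h|h|h|h|h|h
    · rw [h] at pr3; exact absurd pr3 c32
    · rw [h] at pr3; exact absurd pr3 c33
    · rw [h] at pr3; exact absurd pr3 c34
    · rw [h] at pr3; exact absurd pr3 c35
    · rw [h] at pr3; exact absurd pr3 c36
    · exact h
  have h37 : Nat.Prime (30*t+37) := by rw [a3] at pr3; exact pr3
  refine ⟨h37, ?_⟩
  have b4 : Hseq (30*t+29) 4 = 30*t+32 :=
    hstep 3 (by norm_num) b3 (by omega) (iff_of_false c32 (by norm_num))
      (by intro z h1 h2; exfalso; omega)
  have a4 : Hseq (30*t+31) 4 = 30*t+38 :=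
    hstep 3 (by norm_num) a3 (by omega) (iff_of_false c38 (by norm_num))
      (by intro z h1 h2; exfalso; omega)
  have b5 : Hseq (30*t+29) 5 = 30*t+37 :=
    hstep 4 (by norm_num) b4 (by omega) (iff_of_true h37 (by norm_num))
      (by intro z h1 h2
          have hz : z = 30*t+33 ∨ z = 30*t+34 ∨ z = 30*t+35 ∨ z = 30*t+36 := by omega
          rcases hz with rfl|rfl|rfl|rfl
          · exact fun hiff => c33 (hiff.mpr (by norm_num))
          · exact fun hiff => c34 (hiff.mpr (by norm_num))
          · exact fun hiff => c35 (hiff.mpr (by norm_num))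
          · exact fun hiff => c36 (hiff.mpr (by norm_num)))
  by_cases h41 : Nat.Prime (30*t+41)
  · by_cases h43 : Nat.Prime (30*t+43)
    · exact ⟨h41, h43⟩
    · exfalso
      have a5 : Hseq (30*t+31) 5 = 30*t+41 :=
        hstep 4 (by norm_num) a4 (by omega) (iff_of_true h41 (by norm_num))
          (by intro z h1 h2
              have hz : z = 30*t+39 ∨ z = 30*t+40 := by omega
              rcases hz with rfl|rfl
              · exact fun hiff => c39 (hiff.mpr (by norm_num))
              · exact fun hiff => c40 (hiff.mpr (by norm_num)))
      have b6 : Hseq (30*t+29) 6 = 30*t+38 :=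
        hstep 5 (by norm_num) b5 (by omega) (iff_of_false c38 (by norm_num))
          (by intro z h1 h2; exfalso; omega)
      have a6 : Hseq (30*t+31) 6 = 30*t+42 :=
        hstep 5 (by norm_num) a5 (by omega) (iff_of_false c42 (by norm_num))
          (by intro z h1 h2; exfalso; omega)
      have b7 : Hseq (30*t+29) 7 = 30*t+41 :=
        hstep 6 (by norm_num) b6 (by omega) (iff_of_true h41 (by norm_num))
          (by intro z h1 h2
              have hz : z = 30*t+39 ∨ z = 30*t+40 := by omega
              rcases hz with rfl|rfl
              · exact fun hiff => c39 (hiff.mpr (by norm_num))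
              · exact fun hiff => c40 (hiff.mpr (by norm_num)))
      have s7 := hseq_spec (c := 30*t+31) 6 (by norm_num)
      rw [a6] at s7
      have pr7 : Nat.Prime (Hseq (30*t+31) 7) := s7.2.mpr (by norm_num)
      have lo7 : 30*t+42 < Hseq (30*t+31) 7 := s7.1
      have hy7 := hyp 7 (by norm_num)
      rw [b7] at hy7
      have a7 : Hseq (30*t+31) 7 = 30*t+47 := by
        have hc : Hseq (30*t+31) 7 = 30*t+43 ∨ Hseq (30*t+31) 7 = 30*t+44 ∨
            Hseq (30*t+31) 7 = 30*t+45 ∨ Hseq (30*t+31) 7 = 30*t+46 ∨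
            Hseq (30*t+31) 7 = 30*t+47 := by omega
        rcases hc with h|h|h|h|h
        · rw [h] at pr7; exact absurd pr7 h43
        · rw [h] at pr7; exact absurd pr7 c44
        · rw [h] at pr7; exact absurd pr7 c45
        · rw [h] at pr7; exact absurd pr7 c46
        · exact h
      have h47 : Nat.Prime (30*t+47) := by rw [a7] at pr7; exact pr7
      have b8 : Hseq (30*t+29) 8 = 30*t+42 :=
        hstep 7 (by norm_num) b7 (by omega) (iff_of_false c42 (by norm_num))
          (by intro z h1 h2; exfalso; omega)
      have a8 : Hseq (30*t+31) 8 = 30*t+48 :=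
        hstep 7 (by norm_num) a7 (by omega) (iff_of_false c48 (by norm_num))
          (by intro z h1 h2; exfalso; omega)
      have b9 : Hseq (30*t+29) 9 = 30*t+43 :=
        hstep 8 (by norm_num) b8 (by omega) (iff_of_false h43 (by norm_num))
          (by intro z h1 h2; exfalso; omega)
      by_cases h49 : Nat.Prime (30*t+49)
      · have a9 : Hseq (30*t+31) 9 = 30*t+50 :=
          hstep 8 (by norm_num) a8 (by omega) (iff_of_false c50 (by norm_num))
            (by intro z h1 h2
                have hz : z = 30*t+49 := by omega
                subst hz
                exact fun hiff => (by norm_num : ¬ Nat.Prime (8+1)) (hiff.mp h49))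
        have hy9 := hyp 9 (by norm_num)
        rw [a9, b9] at hy9
        omega
      · have a9 : Hseq (30*t+31) 9 = 30*t+49 :=
          hstep 8 (by norm_num) a8 (by omega) (iff_of_false h49 (by norm_num))
            (by intro z h1 h2; exfalso; omega)
        have b10 : Hseq (30*t+29) 10 = 30*t+44 :=
          hstep 9 (by norm_num) b9 (by omega) (iff_of_false c44 (by norm_num))
            (by intro z h1 h2; exfalso; omega)
        have a10 : Hseq (30*t+31) 10 = 30*t+50 :=
          hstep 9 (by norm_num) a9 (by omega) (iff_of_false c50 (by norm_num))
            (by intro z h1 h2; exfalso; omega)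
        have b11 : Hseq (30*t+29) 11 = 30*t+47 :=
          hstep 10 (by norm_num) b10 (by omega) (iff_of_true h47 (by norm_num))
            (by intro z h1 h2
                have hz : z = 30*t+45 ∨ z = 30*t+46 := by omega
                rcases hz with rfl|rfl
                · exact fun hiff => c45 (hiff.mpr (by norm_num))
                · exact fun hiff => c46 (hiff.mpr (by norm_num)))
        have s11 := hseq_spec (c := 30*t+31) 10 (by norm_num)
        rw [a10] at s11
        have pr11 : Nat.Prime (Hseq (30*t+31) 11) := s11.2.mpr (by norm_num)
        have lo11 : 30*t+50 < Hseq (30*t+31) 11 := s11.1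
        have hy11 := hyp 11 (by norm_num)
        rw [b11] at hy11
        have a11 : Hseq (30*t+31) 11 = 30*t+53 := by
          have hc : Hseq (30*t+31) 11 = 30*t+51 ∨ Hseq (30*t+31) 11 = 30*t+52 ∨
              Hseq (30*t+31) 11 = 30*t+53 := by omega
          rcases hc with h|h|h
          · rw [h] at pr11; exact absurd pr11 c51
          · rw [h] at pr11; exact absurd pr11 c52
          · exact h
        have h53 : Nat.Prime (30*t+53) := by rw [a11] at pr11; exact pr11
        have b12 : Hseq (30*t+29) 12 = 30*t+48 :=
          hstep 11 (by norm_num) b11 (by omega) (iff_of_false c48 (by norm_num))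
            (by intro z h1 h2; exfalso; omega)
        have a12 : Hseq (30*t+31) 12 = 30*t+54 :=
          hstep 11 (by norm_num) a11 (by omega) (iff_of_false c54 (by norm_num))
            (by intro z h1 h2; exfalso; omega)
        have b13 : Hseq (30*t+29) 13 = 30*t+53 :=
          hstep 12 (by norm_num) b12 (by omega) (iff_of_true h53 (by norm_num))
            (by intro z h1 h2
                have hz : z = 30*t+49 ∨ z = 30*t+50 ∨ z = 30*t+51 ∨ z = 30*t+52 := by omega
                rcases hz with rfl|rfl|rfl|rfl
                · exact fun hiff => h49 (hiff.mpr (by norm_num))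
                · exact fun hiff => c50 (hiff.mpr (by norm_num))
                · exact fun hiff => c51 (hiff.mpr (by norm_num))
                · exact fun hiff => c52 (hiff.mpr (by norm_num)))
        exact tail13 t hyp h53 b13 a12
  · exfalso
    have s5 := hseq_spec (c := 30*t+31) 4 (by norm_num)
    rw [a4] at s5
    have pr5 : Nat.Prime (Hseq (30*t+31) 5) := s5.2.mpr (by norm_num)
    have lo5 : 30*t+38 < Hseq (30*t+31) 5 := s5.1
    have hy5 := hyp 5 (by norm_num)
    rw [b5] at hy5
    have a5 : Hseq (30*t+31) 5 = 30*t+43 := by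
      have hc : Hseq (30*t+31) 5 = 30*t+39 ∨ Hseq (30*t+31) 5 = 30*t+40 ∨
          Hseq (30*t+31) 5 = 30*t+41 ∨ Hseq (30*t+31) 5 = 30*t+42 ∨
          Hseq (30*t+31) 5 = 30*t+43 := by omega
      rcases hc with h|h|h|h|h
      · rw [h] at pr5; exact absurd pr5 c39
      · rw [h] at pr5; exact absurd pr5 c40
      · rw [h] at pr5; exact absurd pr5 h41
      · rw [h] at pr5; exact absurd pr5 c42
      · exact h
    have h43 : Nat.Prime (30*t+43) := by rw [a5] at pr5; exact pr5
    have b6 : Hseq (30*t+29) 6 = 30*t+38 :=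
      hstep 5 (by norm_num) b5 (by omega) (iff_of_false c38 (by norm_num))
        (by intro z h1 h2; exfalso; omega)
    have a6 : Hseq (30*t+31) 6 = 30*t+44 :=
      hstep 5 (by norm_num) a5 (by omega) (iff_of_false c44 (by norm_num))
        (by intro z h1 h2; exfalso; omega)
    have b7 : Hseq (30*t+29) 7 = 30*t+43 :=
      hstep 6 (by norm_num) b6 (by omega) (iff_of_true h43 (by norm_num))
        (by intro z h1 h2
            have hz : z = 30*t+39 ∨ z = 30*t+40 ∨ z = 30*t+41 ∨ z = 30*t+42 := by omega
            rcases hz with rfl|rfl|rfl|rfl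
            · exact fun hiff => c39 (hiff.mpr (by norm_num))
            · exact fun hiff => c40 (hiff.mpr (by norm_num))
            · exact fun hiff => h41 (hiff.mpr (by norm_num))
            · exact fun hiff => c42 (hiff.mpr (by norm_num)))
    have s7 := hseq_spec (c := 30*t+31) 6 (by norm_num)
    rw [a6] at s7
    have pr7 : Nat.Prime (Hseq (30*t+31) 7) := s7.2.mpr (by norm_num)
    have lo7 : 30*t+44 < Hseq (30*t+31) 7 := s7.1
    have hy7 := hyp 7 (by norm_num)
    rw [b7] at hy7
    have hc7 : Hseq (30*t+31) 7 = 30*t+47 ∨ Hseq (30*t+31) 7 = 30*t+49 := by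
      have hc : Hseq (30*t+31) 7 = 30*t+45 ∨ Hseq (30*t+31) 7 = 30*t+46 ∨
          Hseq (30*t+31) 7 = 30*t+47 ∨ Hseq (30*t+31) 7 = 30*t+48 ∨
          Hseq (30*t+31) 7 = 30*t+49 := by omega
      rcases hc with h|h|h|h|h
      · rw [h] at pr7; exact absurd pr7 c45
      · rw [h] at pr7; exact absurd pr7 c46
      · exact Or.inl h
      · rw [h] at pr7; exact absurd pr7 c48
      · exact Or.inr h
    rcases hc7 with a7 | a7
    · have h47 : Nat.Prime (30*t+47) := by rw [a7] at pr7; exact pr7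
      have b8 : Hseq (30*t+29) 8 = 30*t+44 :=
        hstep 7 (by norm_num) b7 (by omega) (iff_of_false c44 (by norm_num))
          (by intro z h1 h2; exfalso; omega)
      have a8 : Hseq (30*t+31) 8 = 30*t+48 :=
        hstep 7 (by norm_num) a7 (by omega) (iff_of_false c48 (by norm_num))
          (by intro z h1 h2; exfalso; omega)
      have b9 : Hseq (30*t+29) 9 = 30*t+45 :=
        hstep 8 (by norm_num) b8 (by omega) (iff_of_false c45 (by norm_num))
          (by intro z h1 h2; exfalso; omega)
      by_cases h49 : Nat.Prime (30*t+49)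
      · have a9 : Hseq (30*t+31) 9 = 30*t+50 :=
          hstep 8 (by norm_num) a8 (by omega) (iff_of_false c50 (by norm_num))
            (by intro z h1 h2
                have hz : z = 30*t+49 := by omega
                subst hz
                exact fun hiff => (by norm_num : ¬ Nat.Prime (8+1)) (hiff.mp h49))
        have b10 : Hseq (30*t+29) 10 = 30*t+46 :=
          hstep 9 (by norm_num) b9 (by omega) (iff_of_false c46 (by norm_num))
            (by intro z h1 h2; exfalso; omega)
        have a10 : Hseq (30*t+31) 10 = 30*t+51 :=
          hstep 9 (by norm_num) a9 (by omega) (iff_of_false c51 (by norm_num))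
            (by intro z h1 h2; exfalso; omega)
        have b11 : Hseq (30*t+29) 11 = 30*t+47 :=
          hstep 10 (by norm_num) b10 (by omega) (iff_of_true h47 (by norm_num))
            (by intro z h1 h2; exfalso; omega)
        have s11 := hseq_spec (c := 30*t+31) 10 (by norm_num)
        rw [a10] at s11
        have pr11 : Nat.Prime (Hseq (30*t+31) 11) := s11.2.mpr (by norm_num)
        have lo11 : 30*t+51 < Hseq (30*t+31) 11 := s11.1
        have hy11 := hyp 11 (by norm_num)
        rw [b11] at hy11
        have a11 : Hseq (30*t+31) 11 = 30*t+53 := by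
          have hc : Hseq (30*t+31) 11 = 30*t+52 ∨ Hseq (30*t+31) 11 = 30*t+53 := by omega
          rcases hc with h|h
          · rw [h] at pr11; exact absurd pr11 c52
          · exact h
        have b12 : Hseq (30*t+29) 12 = 30*t+48 :=
          hstep 11 (by norm_num) b11 (by omega) (iff_of_false c48 (by norm_num))
            (by intro z h1 h2; exfalso; omega)
        have a12 : Hseq (30*t+31) 12 = 30*t+54 :=
          hstep 11 (by norm_num) a11 (by omega) (iff_of_false c54 (by norm_num))
            (by intro z h1 h2; exfalso; omega)
        have b13 : Hseq (30*t+29) 13 = 30*t+49 :=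
          hstep 12 (by norm_num) b12 (by omega) (iff_of_true h49 (by norm_num))
            (by intro z h1 h2; exfalso; omega)
        have s13 := hseq_spec (c := 30*t+31) 12 (by norm_num)
        rw [a12] at s13
        have pr13 : Nat.Prime (Hseq (30*t+31) 13) := s13.2.mpr (by norm_num)
        have lo13 : 30*t+54 < Hseq (30*t+31) 13 := s13.1
        have hy13 := hyp 13 (by norm_num)
        rw [b13] at hy13
        have hc13 : Hseq (30*t+31) 13 = 30*t+55 := by omega
        rw [hc13] at pr13
        exact c55 pr13
      · have a9 : Hseq (30*t+31) 9 = 30*t+49 :=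
          hstep 8 (by norm_num) a8 (by omega) (iff_of_false h49 (by norm_num))
            (by intro z h1 h2; exfalso; omega)
        have b10 : Hseq (30*t+29) 10 = 30*t+46 :=
          hstep 9 (by norm_num) b9 (by omega) (iff_of_false c46 (by norm_num))
            (by intro z h1 h2; exfalso; omega)
        have a10 : Hseq (30*t+31) 10 = 30*t+50 :=
          hstep 9 (by norm_num) a9 (by omega) (iff_of_false c50 (by norm_num))
            (by intro z h1 h2; exfalso; omega)
        have b11 : Hseq (30*t+29) 11 = 30*t+47 :=
          hstep 10 (by norm_num) b10 (by omega) (iff_of_true h47 (by norm_num))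
            (by intro z h1 h2; exfalso; omega)
        have s11 := hseq_spec (c := 30*t+31) 10 (by norm_num)
        rw [a10] at s11
        have pr11 : Nat.Prime (Hseq (30*t+31) 11) := s11.2.mpr (by norm_num)
        have lo11 : 30*t+50 < Hseq (30*t+31) 11 := s11.1
        have hy11 := hyp 11 (by norm_num)
        rw [b11] at hy11
        have a11 : Hseq (30*t+31) 11 = 30*t+53 := by
          have hc : Hseq (30*t+31) 11 = 30*t+51 ∨ Hseq (30*t+31) 11 = 30*t+52 ∨
              Hseq (30*t+31) 11 = 30*t+53 := by omega
          rcases hc with h|h|h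
          · rw [h] at pr11; exact absurd pr11 c51
          · rw [h] at pr11; exact absurd pr11 c52
          · exact h
        have h53 : Nat.Prime (30*t+53) := by rw [a11] at pr11; exact pr11
        have b12 : Hseq (30*t+29) 12 = 30*t+48 :=
          hstep 11 (by norm_num) b11 (by omega) (iff_of_false c48 (by norm_num))
            (by intro z h1 h2; exfalso; omega)
        have a12 : Hseq (30*t+31) 12 = 30*t+54 :=
          hstep 11 (by norm_num) a11 (by omega) (iff_of_false c54 (by norm_num))
            (by intro z h1 h2; exfalso; omega)
        have b13 : Hseq (30*t+29) 13 = 30*t+53 :=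
          hstep 12 (by norm_num) b12 (by omega) (iff_of_true h53 (by norm_num))
            (by intro z h1 h2
                have hz : z = 30*t+49 ∨ z = 30*t+50 ∨ z = 30*t+51 ∨ z = 30*t+52 := by omega
                rcases hz with rfl|rfl|rfl|rfl
                · exact fun hiff => h49 (hiff.mpr (by norm_num))
                · exact fun hiff => c50 (hiff.mpr (by norm_num))
                · exact fun hiff => c51 (hiff.mpr (by norm_num))
                · exact fun hiff => c52 (hiff.mpr (by norm_num)))
        exact tail13 t hyp h53 b13 a12
    · have h49 : Nat.Prime (30*t+49) := by rw [a7] at pr7; exact pr7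
      have h47 : ¬ Nat.Prime (30*t+47) := by
        intro h
        have hle7 := hle 6 (by norm_num) a6 (by omega) (iff_of_true h (by norm_num))
        rw [a7] at hle7
        omega
      have b8 : Hseq (30*t+29) 8 = 30*t+44 :=
        hstep 7 (by norm_num) b7 (by omega) (iff_of_false c44 (by norm_num))
          (by intro z h1 h2; exfalso; omega)
      have a8 : Hseq (30*t+31) 8 = 30*t+50 :=
        hstep 7 (by norm_num) a7 (by omega) (iff_of_false c50 (by norm_num))
          (by intro z h1 h2; exfalso; omega)
      have b9 : Hseq (30*t+29) 9 = 30*t+45 :=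
        hstep 8 (by norm_num) b8 (by omega) (iff_of_false c45 (by norm_num))
          (by intro z h1 h2; exfalso; omega)
      have a9 : Hseq (30*t+31) 9 = 30*t+51 :=
        hstep 8 (by norm_num) a8 (by omega) (iff_of_false c51 (by norm_num))
          (by intro z h1 h2; exfalso; omega)
      have b10 : Hseq (30*t+29) 10 = 30*t+46 :=
        hstep 9 (by norm_num) b9 (by omega) (iff_of_false c46 (by norm_num))
          (by intro z h1 h2; exfalso; omega)
      have a10 : Hseq (30*t+31) 10 = 30*t+52 :=
        hstep 9 (by norm_num) a9 (by omega) (iff_of_false c52 (by norm_num))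
          (by intro z h1 h2; exfalso; omega)
      have b11 : Hseq (30*t+29) 11 = 30*t+49 :=
        hstep 10 (by norm_num) b10 (by omega) (iff_of_true h49 (by norm_num))
          (by intro z h1 h2
              have hz : z = 30*t+47 ∨ z = 30*t+48 := by omega
              rcases hz with rfl|rfl
              · exact fun hiff => h47 (hiff.mpr (by norm_num))
              · exact fun hiff => c48 (hiff.mpr (by norm_num)))
      have s11 := hseq_spec (c := 30*t+31) 10 (by norm_num)
      rw [a10] at s11
      have pr11 : Nat.Prime (Hseq (30*t+31) 11) := s11.2.mpr (by norm_num)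
      have lo11 : 30*t+52 < Hseq (30*t+31) 11 := s11.1
      have hy11 := hyp 11 (by norm_num)
      rw [b11] at hy11
      have a11 : Hseq (30*t+31) 11 = 30*t+53 := by
        have hc : Hseq (30*t+31) 11 = 30*t+53 ∨ Hseq (30*t+31) 11 = 30*t+54 ∨
            Hseq (30*t+31) 11 = 30*t+55 := by omega
        rcases hc with h|h|h
        · exact h
        · rw [h] at pr11; exact absurd pr11 c54
        · rw [h] at pr11; exact absurd pr11 c55
      have h53 : Nat.Prime (30*t+53) := by rw [a11] at pr11; exact pr11
      have b12 : Hseq (30*t+29) 12 = 30*t+50 :=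
        hstep 11 (by norm_num) b11 (by omega) (iff_of_false c50 (by norm_num))
          (by intro z h1 h2; exfalso; omega)
      have a12 : Hseq (30*t+31) 12 = 30*t+54 :=
        hstep 11 (by norm_num) a11 (by omega) (iff_of_false c54 (by norm_num))
          (by intro z h1 h2; exfalso; omega)
      have b13 : Hseq (30*t+29) 13 = 30*t+53 :=
        hstep 12 (by norm_num) b12 (by omega) (iff_of_true h53 (by norm_num))
          (by intro z h1 h2
              have hz : z = 30*t+51 ∨ z = 30*t+52 := by omega
              rcases hz with rfl|rfl
              · exact fun hiff => c51 (hiff.mpr (by norm_num))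
              · exact fun hiff => c52 (hiff.mpr (by norm_num)))
      exact tail13 t hyp h53 b13 a12

set_option maxHeartbeats 1000000 in
private lemma bwd (t : ℕ) (ha : Nat.Prime (30*t+31))
    (h37 : Nat.Prime (30*t+37)) (h41 : Nat.Prime (30*t+41)) (h43 : Nat.Prime (30*t+43)) :
    ∀ n, 2 ≤ n → Hseq (30*t+31) n - Hseq (30*t+29) n ≤ 6 := by
  have c30 : ¬ Nat.Prime (30*t+30) := np_dvd (d := 2) (by norm_num) (by omega) ⟨15*t+15, by ring⟩
  have c32 : ¬ Nat.Prime (30*t+32) := np_dvd (d := 2) (by norm_num) (by omega) ⟨15*t+16, by ring⟩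
  have c33 : ¬ Nat.Prime (30*t+33) := np_dvd (d := 3) (by norm_num) (by omega) ⟨10*t+11, by ring⟩
  have c34 : ¬ Nat.Prime (30*t+34) := np_dvd (d := 2) (by norm_num) (by omega) ⟨15*t+17, by ring⟩
  have c35 : ¬ Nat.Prime (30*t+35) := np_dvd (d := 5) (by norm_num) (by omega) ⟨6*t+7, by ring⟩
  have c36 : ¬ Nat.Prime (30*t+36) := np_dvd (d := 2) (by norm_num) (by omega) ⟨15*t+18, by ring⟩
  have c38 : ¬ Nat.Prime (30*t+38) := np_dvd (d := 2) (by norm_num) (by omega) ⟨15*t+19, by ring⟩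
  have c39 : ¬ Nat.Prime (30*t+39) := np_dvd (d := 3) (by norm_num) (by omega) ⟨10*t+13, by ring⟩
  have c40 : ¬ Nat.Prime (30*t+40) := np_dvd (d := 2) (by norm_num) (by omega) ⟨15*t+20, by ring⟩
  have c42 : ¬ Nat.Prime (30*t+42) := np_dvd (d := 2) (by norm_num) (by omega) ⟨15*t+21, by ring⟩
  have c44 : ¬ Nat.Prime (30*t+44) := np_dvd (d := 2) (by norm_num) (by omega) ⟨15*t+22, by ring⟩
  have c45 : ¬ Nat.Prime (30*t+45) := np_dvd (d := 3) (by norm_num) (by omega) ⟨10*t+15, by ring⟩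
  have c46 : ¬ Nat.Prime (30*t+46) := np_dvd (d := 2) (by norm_num) (by omega) ⟨15*t+23, by ring⟩
  have b2 : Hseq (30*t+29) 2 = 30*t+29 := rfl
  have a2 : Hseq (30*t+31) 2 = 30*t+31 := rfl
  have b3 : Hseq (30*t+29) 3 = 30*t+31 :=
    hstep 2 (by norm_num) b2 (by omega) (iff_of_true ha (by norm_num))
      (by intro z h1 h2
          have hz : z = 30*t+30 := by omega
          subst hz
          exact fun hiff => c30 (hiff.mpr (by norm_num)))
  have a3 : Hseq (30*t+31) 3 = 30*t+37 :=
    hstep 2 (by norm_num) a2 (by omega) (iff_of_true h37 (by norm_num))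
      (by intro z h1 h2
          have hz : z = 30*t+32 ∨ z = 30*t+33 ∨ z = 30*t+34 ∨ z = 30*t+35 ∨ z = 30*t+36 := by
            omega
          rcases hz with rfl|rfl|rfl|rfl|rfl
          · exact fun hiff => c32 (hiff.mpr (by norm_num))
          · exact fun hiff => c33 (hiff.mpr (by norm_num))
          · exact fun hiff => c34 (hiff.mpr (by norm_num))
          · exact fun hiff => c35 (hiff.mpr (by norm_num))
          · exact fun hiff => c36 (hiff.mpr (by norm_num)))
  have b4 : Hseq (30*t+29) 4 = 30*t+32 :=
    hstep 3 (by norm_num) b3 (by omega) (iff_of_false c32 (by norm_num))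
      (by intro z h1 h2; exfalso; omega)
  have a4 : Hseq (30*t+31) 4 = 30*t+38 :=
    hstep 3 (by norm_num) a3 (by omega) (iff_of_false c38 (by norm_num))
      (by intro z h1 h2; exfalso; omega)
  have b5 : Hseq (30*t+29) 5 = 30*t+37 :=
    hstep 4 (by norm_num) b4 (by omega) (iff_of_true h37 (by norm_num))
      (by intro z h1 h2
          have hz : z = 30*t+33 ∨ z = 30*t+34 ∨ z = 30*t+35 ∨ z = 30*t+36 := by omega
          rcases hz with rfl|rfl|rfl|rfl
          · exact fun hiff => c33 (hiff.mpr (by norm_num))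
          · exact fun hiff => c34 (hiff.mpr (by norm_num))
          · exact fun hiff => c35 (hiff.mpr (by norm_num))
          · exact fun hiff => c36 (hiff.mpr (by norm_num)))
  have a5 : Hseq (30*t+31) 5 = 30*t+41 :=
    hstep 4 (by norm_num) a4 (by omega) (iff_of_true h41 (by norm_num))
      (by intro z h1 h2
          have hz : z = 30*t+39 ∨ z = 30*t+40 := by omega
          rcases hz with rfl|rfl
          · exact fun hiff => c39 (hiff.mpr (by norm_num))
          · exact fun hiff => c40 (hiff.mpr (by norm_num)))
  have b6 : Hseq (30*t+29) 6 = 30*t+38 :=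
    hstep 5 (by norm_num) b5 (by omega) (iff_of_false c38 (by norm_num))
      (by intro z h1 h2; exfalso; omega)
  have a6 : Hseq (30*t+31) 6 = 30*t+42 :=
    hstep 5 (by norm_num) a5 (by omega) (iff_of_false c42 (by norm_num))
      (by intro z h1 h2; exfalso; omega)
  have b7 : Hseq (30*t+29) 7 = 30*t+41 :=
    hstep 6 (by norm_num) b6 (by omega) (iff_of_true h41 (by norm_num))
      (by intro z h1 h2
          have hz : z = 30*t+39 ∨ z = 30*t+40 := by omega
          rcases hz with rfl|rfl
          · exact fun hiff => c39 (hiff.mpr (by norm_num))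
          · exact fun hiff => c40 (hiff.mpr (by norm_num)))
  have a7 : Hseq (30*t+31) 7 = 30*t+43 :=
    hstep 6 (by norm_num) a6 (by omega) (iff_of_true h43 (by norm_num))
      (by intro z h1 h2; exfalso; omega)
  have b8 : Hseq (30*t+29) 8 = 30*t+42 :=
    hstep 7 (by norm_num) b7 (by omega) (iff_of_false c42 (by norm_num))
      (by intro z h1 h2; exfalso; omega)
  have a8 : Hseq (30*t+31) 8 = 30*t+44 :=
    hstep 7 (by norm_num) a7 (by omega) (iff_of_false c44 (by norm_num))
      (by intro z h1 h2; exfalso; omega)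
  have b9 : Hseq (30*t+29) 9 = 30*t+44 :=
    hstep 8 (by norm_num) b8 (by omega) (iff_of_false c44 (by norm_num))
      (by intro z h1 h2
          have hz : z = 30*t+43 := by omega
          subst hz
          exact fun hiff => (by norm_num : ¬ Nat.Prime (8+1)) (hiff.mp h43))
  have a9 : Hseq (30*t+31) 9 = 30*t+45 :=
    hstep 8 (by norm_num) a8 (by omega) (iff_of_false c45 (by norm_num))
      (by intro z h1 h2; exfalso; omega)
  have b10 : Hseq (30*t+29) 10 = 30*t+45 :=
    hstep 9 (by norm_num) b9 (by omega) (iff_of_false c45 (by norm_num))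
      (by intro z h1 h2; exfalso; omega)
  have a10 : Hseq (30*t+31) 10 = 30*t+46 :=
    hstep 9 (by norm_num) a9 (by omega) (iff_of_false c46 (by norm_num))
      (by intro z h1 h2; exfalso; omega)
  have eq11 : Hseq (30*t+31) 11 = Hseq (30*t+29) 11 := by
    rw [hseq_succ (c := 30*t+31) (n := 10) (by norm_num),
        hseq_succ (c := 30*t+29) (n := 10) (by norm_num), a10, b10]
    congr 1
    ext m
    simp only [Set.mem_setOf_eq]
    constructor
    · rintro ⟨h1, h2⟩
      exact ⟨by omega, h2⟩
    · rintro ⟨h1, h2⟩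
      have hm : Nat.Prime m := h2.mpr (by norm_num)
      have hne : m ≠ 30*t+46 := fun h => c46 (h ▸ hm)
      exact ⟨by omega, h2⟩
  have eqge : ∀ m, Hseq (30*t+31) (m+11) = Hseq (30*t+29) (m+11) := by
    intro m
    induction m with
    | zero => exact eq11
    | succ k ih =>
      have h := hcongr (c := 30*t+31) (d := 30*t+29) (k+11) (by omega) ih
      rw [show k+11+1 = k+1+11 from by omega] at h
      exact h
  intro n hn
  rcases Nat.lt_or_ge n 11 with h | h
  · interval_cases n
    · rw [a2, b2]; omega
    · rw [a3, b3]; omega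
    · rw [a4, b4]; omega
    · rw [a5, b5]; omega
    · rw [a6, b6]; omega
    · rw [a7, b7]; omega
    · rw [a8, b8]; omega
    · rw [a9, b9]; omega
    · rw [a10, b10]; omega
  · obtain ⟨m, rfl⟩ : ∃ m, n = m + 11 := ⟨n - 11, by omega⟩
    rw [eqge m]
    omega

private lemma consec_iff (t : ℕ) (hb : Nat.Prime (30*t+29)) (ha : Nat.Prime (30*t+31)) :
    (Nat.Prime (30*t+37) ∧ Nat.Prime (30*t+41) ∧ Nat.Prime (30*t+43)) ↔
      ConsecPrimes [30*t+29, 30*t+31, 30*t+37, 30*t+41, 30*t+43] := by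
  constructor
  · rintro ⟨h37, h41, h43⟩
    refine ⟨?_, ?_, ?_⟩
    · simp only [List.Chain', List.isChain_cons_cons, List.isChain_singleton, and_true]
      omega
    · intro x hx
      simp only [List.mem_cons, List.not_mem_nil, or_false] at hx
      rcases hx with rfl|rfl|rfl|rfl|rfl <;> assumption
    · intro q hq h1 h2
      have c30 : ¬ Nat.Prime (30*t+30) := np_dvd (d := 2) (by norm_num) (by omega) ⟨15*t+15, by ring⟩
      have c32 : ¬ Nat.Prime (30*t+32) := np_dvd (d := 2) (by norm_num) (by omega) ⟨15*t+16, by ring⟩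
      have c33 : ¬ Nat.Prime (30*t+33) := np_dvd (d := 3) (by norm_num) (by omega) ⟨10*t+11, by ring⟩
      have c34 : ¬ Nat.Prime (30*t+34) := np_dvd (d := 2) (by norm_num) (by omega) ⟨15*t+17, by ring⟩
      have c35 : ¬ Nat.Prime (30*t+35) := np_dvd (d := 5) (by norm_num) (by omega) ⟨6*t+7, by ring⟩
      have c36 : ¬ Nat.Prime (30*t+36) := np_dvd (d := 2) (by norm_num) (by omega) ⟨15*t+18, by ring⟩
      have c38 : ¬ Nat.Prime (30*t+38) := np_dvd (d := 2) (by norm_num) (by omega) ⟨15*t+19, by ring⟩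
      have c39 : ¬ Nat.Prime (30*t+39) := np_dvd (d := 3) (by norm_num) (by omega) ⟨10*t+13, by ring⟩
      have c40 : ¬ Nat.Prime (30*t+40) := np_dvd (d := 2) (by norm_num) (by omega) ⟨15*t+20, by ring⟩
      have c42 : ¬ Nat.Prime (30*t+42) := np_dvd (d := 2) (by norm_num) (by omega) ⟨15*t+21, by ring⟩
      have h1' : 30*t+29 ≤ q := by simpa using h1
      have h2' : q ≤ 30*t+43 := by
        have : [30*t+29, 30*t+31, 30*t+37, 30*t+41, 30*t+43].getLast! = 30*t+43 := by
          simp [List.getLast!]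
        rwa [this] at h2
      have hne : ∀ k, q = 30*t+k → ¬ Nat.Prime (30*t+k) → False := fun k hk hnk => hnk (hk ▸ hq)
      have hq' : q = 30*t+29 ∨ q = 30*t+31 ∨ q = 30*t+37 ∨ q = 30*t+41 ∨ q = 30*t+43 := by
        by_contra hcon
        push_neg at hcon
        have h30 : q ≠ 30*t+30 := fun h => c30 (h ▸ hq)
        have h32 : q ≠ 30*t+32 := fun h => c32 (h ▸ hq)
        have h33 : q ≠ 30*t+33 := fun h => c33 (h ▸ hq)
        have h34 : q ≠ 30*t+34 := fun h => c34 (h ▸ hq)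
        have h35 : q ≠ 30*t+35 := fun h => c35 (h ▸ hq)
        have h36 : q ≠ 30*t+36 := fun h => c36 (h ▸ hq)
        have h38 : q ≠ 30*t+38 := fun h => c38 (h ▸ hq)
        have h39 : q ≠ 30*t+39 := fun h => c39 (h ▸ hq)
        have h40 : q ≠ 30*t+40 := fun h => c40 (h ▸ hq)
        have h42 : q ≠ 30*t+42 := fun h => c42 (h ▸ hq)
        omega
      simp only [List.mem_cons, List.not_mem_nil, or_false]
      exact hq'
  · rintro ⟨_, hpr, _⟩
    exact ⟨hpr _ (by simp), hpr _ (by simp), hpr _ (by simp)⟩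

theorem stmt10 (t : ℕ) (hb : Nat.Prime (30*t+29)) (ha : Nat.Prime (30*t+31)) :
    ((∀ n, 2 ≤ n → Hseq (30*t+31) n - Hseq (30*t+29) n ≤ 6) ↔
        (Nat.Prime (30*t+37) ∧ Nat.Prime (30*t+41) ∧ Nat.Prime (30*t+43))) ∧
    ((∀ n, 2 ≤ n → Hseq (30*t+31) n - Hseq (30*t+29) n ≤ 6) ↔
        ConsecPrimes [30*t+29, 30*t+31, 30*t+37, 30*t+41, 30*t+43]) := by
  have hiff : (∀ n, 2 ≤ n → Hseq (30*t+31) n - Hseq (30*t+29) n ≤ 6) ↔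
      (Nat.Prime (30*t+37) ∧ Nat.Prime (30*t+41) ∧ Nat.Prime (30*t+43)) :=
    ⟨fwd t hb ha, fun h => bwd t ha h.1 h.2.1 h.2.2⟩
  exact ⟨hiff, hiff.trans (consec_iff t hb ha)⟩
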